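/- Let k be a field containing a primitive n-th root of unity ε, with n ≥ 3, and define in S_N = k[x_0,…,x_N]: C_{N,n} = ⋂_{0≤i<j≤N} (x_i, x_j), J_{N,n} = ⋂_{0≤i<j<l≤N, 0≤a,b<n} (x_i − ε^a x_j, x_i − ε^b x_l), and I_{N,n} = J_{N,n} ∩ C_{N,n}. Then F_{N,n} = ∏_{0≤i<j≤N}(x_i^n − x_j^n) lies in the third symbolic power I_{N,n}^{(3)}. -/

import Mathlib

open MvPolynomial

noncomputable section

/-- `F_{M,n} = ∏_{0 ≤ i < j < M} (x_i^n − x_j^n)` in `k[x_0,…,x_{M-1}]`. -/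
def fermatPoly (k : Type*) [Field k] (M n : ℕ) : MvPolynomial (Fin M) k :=
  ∏ p ∈ Finset.univ.filter (fun p : Fin M × Fin M => p.1 < p.2), (X p.1 ^ n - X p.2 ^ n)

/-- `C_{M,n} = ⋂_{i<j} (x_i, x_j)`. -/
def cevaC (k : Type*) [Field k] (M : ℕ) : Ideal (MvPolynomial (Fin M) k) :=
  ⨅ (i : Fin M) (j : Fin M) (_ : i < j), Ideal.span {X i, X j}

/-- `J_{M,n} = ⋂_{i<j<l, 0≤a,b<n} (x_i − ε^a x_j, x_i − ε^b x_l)`. -/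
def cevaJ (k : Type*) [Field k] (M n : ℕ) (ε : k) : Ideal (MvPolynomial (Fin M) k) :=
  ⨅ (i : Fin M) (j : Fin M) (l : Fin M) (_ : i < j) (_ : j < l) (a : Fin n) (b : Fin n),
    Ideal.span {X i - C (ε ^ (a : ℕ)) * X j, X i - C (ε ^ (b : ℕ)) * X l}

/-- `I_{M,n} = J_{M,n} ∩ C_{M,n}`. -/
def cevaI (k : Type*) [Field k] (M n : ℕ) (ε : k) : Ideal (MvPolynomial (Fin M) k) :=
  cevaJ k M n ε ⊓ cevaC k M

/-- The `r`-th symbolic power of `I`: the intersection, over the associated primes `p` of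
`R/I`, of the contraction of `I^r R_p` back to `R` along the localization map `R → R_p`. -/
def symbolicPower {R : Type*} [CommRing R] (I : Ideal R) (r : ℕ) : Ideal R :=
  sInf { K : Ideal R | ∃ (p : Ideal R) (hp : p ∈ associatedPrimes R (R ⧸ I)),
    K = Ideal.comap (algebraMap R (Localization (@Ideal.primeCompl R _ p hp.1)))
        (Ideal.map (algebraMap R (Localization (@Ideal.primeCompl R _ p hp.1))) (I ^ r)) }



noncomputable section one

variable {k : Type*} [Field k] {M : ℕ}

lemma span_eq_ker (S : Set (MvPolynomial (Fin M) k))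
    (φ : MvPolynomial (Fin M) k →ₐ[k] MvPolynomial (Fin M) k)
    (h1 : ∀ g ∈ S, φ g = 0) (h2 : ∀ v, X v - φ (X v) ∈ Ideal.span S) :
    Ideal.span S = RingHom.ker (φ : MvPolynomial (Fin M) k →+* MvPolynomial (Fin M) k) := by
  apply le_antisymm
  · rw [Ideal.span_le]
    intro g hg
    simpa [RingHom.mem_ker] using h1 g hg
  · intro f hf
    have key : (Ideal.Quotient.mkₐ k (Ideal.span S)).comp φ = Ideal.Quotient.mkₐ k (Ideal.span S) := by
      apply MvPolynomial.algHom_ext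
      intro v
      simp only [AlgHom.comp_apply, Ideal.Quotient.mkₐ_eq_mk]
      rw [Ideal.Quotient.mk_eq_mk_iff_sub_mem]
      simpa using (Ideal.span S).neg_mem (h2 v)
    have hf0 : φ f = 0 := hf
    have := congrArg (fun ψ : MvPolynomial (Fin M) k →ₐ[k] _ => ψ f) key
    simp only [AlgHom.comp_apply, hf0, map_zero, Ideal.Quotient.mkₐ_eq_mk] at this
    exact (Ideal.Quotient.eq_zero_iff_mem).1 this.symm

end one
noncomputable section two
variable {k : Type*} [Field k] {M : ℕ}

/-- Substitution killing `X i` and `X j`. -/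
def phiC (i j : Fin M) : MvPolynomial (Fin M) k →ₐ[k] MvPolynomial (Fin M) k :=
  aeval (fun v => if v = i then 0 else if v = j then 0 else X v)

lemma phiC_Xi (i j : Fin M) : phiC (k := k) i j (X i) = 0 := by simp [phiC]
lemma phiC_Xj (i j : Fin M) : phiC (k := k) i j (X j) = 0 := by simp [phiC]
lemma phiC_X_of_ne {i j v : Fin M} (h1 : v ≠ i) (h2 : v ≠ j) :
    phiC (k := k) i j (X v) = X v := by simp [phiC, h1, h2]

lemma spanC_eq_ker (i j : Fin M) :
    Ideal.span {X i, X j} = RingHom.ker ((phiC i j : MvPolynomial (Fin M) k →ₐ[k] _) :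
      MvPolynomial (Fin M) k →+* MvPolynomial (Fin M) k) := by
  apply span_eq_ker
  · rintro g (rfl | rfl)
    · exact phiC_Xi i j
    · exact phiC_Xj i j
  · intro v
    by_cases hvi : v = i
    · subst hvi
      rw [phiC_Xi]
      exact sub_mem (Ideal.subset_span (Set.mem_insert _ _)) (Ideal.zero_mem _)
    by_cases hvj : v = j
    · subst hvj
      rw [phiC_Xj]
      exact sub_mem (Ideal.subset_span (Set.mem_insert_of_mem _ (Set.mem_singleton _))) (Ideal.zero_mem _)
    · rw [phiC_X_of_ne hvi hvj]
      simp

lemma mem_spanC_iff (i j : Fin M) (f : MvPolynomial (Fin M) k) :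
    f ∈ Ideal.span {X i, X j} ↔ phiC i j f = 0 := by
  rw [spanC_eq_ker]; rfl

lemma spanC_isPrime (i j : Fin M) :
    (Ideal.span {X i, X j} : Ideal (MvPolynomial (Fin M) k)).IsPrime := by
  rw [spanC_eq_ker]
  exact RingHom.ker_isPrime _

/-- Substitution for the `J`-components: `X i ↦ d • X l`, `X j ↦ (d/c) • X l`. -/
def phiJ (i j l : Fin M) (c d : k) : MvPolynomial (Fin M) k →ₐ[k] MvPolynomial (Fin M) k :=
  aeval (fun v => if v = i then C d * X l else if v = j then C (d * c⁻¹) * X l else X v)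

lemma phiJ_Xi {i j l : Fin M} (c d : k) : phiJ (k := k) i j l c d (X i) = C d * X l := by
  simp [phiJ]
lemma phiJ_Xj {i j l : Fin M} (c d : k) (hij : i ≠ j) :
    phiJ (k := k) i j l c d (X j) = C (d * c⁻¹) * X l := by
  simp [phiJ, Ne.symm hij]
lemma phiJ_X_of_ne {i j l v : Fin M} (c d : k) (h1 : v ≠ i) (h2 : v ≠ j) :
    phiJ (k := k) i j l c d (X v) = X v := by simp [phiJ, h1, h2]

lemma spanJ_eq_ker {i j l : Fin M} {c d : k} (hij : i ≠ j) (hil : i ≠ l) (hjl : j ≠ l)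
    (hc : c ≠ 0) :
    Ideal.span {X i - C c * X j, X i - C d * X l} =
      RingHom.ker ((phiJ i j l c d : MvPolynomial (Fin M) k →ₐ[k] _) :
        MvPolynomial (Fin M) k →+* MvPolynomial (Fin M) k) := by
  have hXl : phiJ (k := k) i j l c d (X l) = X l :=
    phiJ_X_of_ne c d (Ne.symm hil) (Ne.symm hjl)
  have hcd : c * (d * c⁻¹) = d := by field_simp
  apply span_eq_ker
  · rintro g (rfl | rfl)
    · rw [map_sub, map_mul, phiJ_Xi, phiJ_Xj c d hij]
      have : phiJ (k := k) i j l c d (C c) = C c := by simp [phiJ]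
      rw [this, ← mul_assoc, ← C_mul, hcd]
      ring
    · rw [map_sub, map_mul, phiJ_Xi, hXl]
      have : phiJ (k := k) i j l c d (C d) = C d := by simp [phiJ]
      rw [this]
      ring
  · intro v
    by_cases hvi : v = i
    · subst hvi
      rw [phiJ_Xi]
      exact Ideal.subset_span (by simp)
    by_cases hvj : v = j
    · subst hvj
      rw [phiJ_Xj c d hij]
      have key : X i - C d * X l - (X i - C c * X v) = C c * (X v - C (d * c⁻¹) * X l) := by
        rw [mul_sub, ← mul_assoc, ← C_mul, hcd]; ring
      have h1 : X i - C c * X v ∈ Ideal.span {X i - C c * X v, X i - C d * X l} :=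
        Ideal.subset_span (by simp)
      have h2 : X i - C d * X l ∈ Ideal.span {X i - C c * X v, X i - C d * X l} :=
        Ideal.subset_span (by simp)
      have h3 : C c * (X v - C (d * c⁻¹) * X l) ∈ Ideal.span {X i - C c * X v, X i - C d * X l} := by
        rw [← key]; exact Ideal.sub_mem _ h2 h1
      have h4 : C c⁻¹ * (C c * (X v - C (d * c⁻¹) * X l)) ∈
          Ideal.span {X i - C c * X v, X i - C d * X l} := Ideal.mul_mem_left _ _ h3
      have h5 : C c⁻¹ * (C c * (X v - C (d * c⁻¹) * X l)) = X v - C (d * c⁻¹) * X l := by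
        rw [← mul_assoc, ← C_mul, inv_mul_cancel₀ hc, C_1, one_mul]
      rwa [h5] at h4
    · rw [phiJ_X_of_ne c d hvi hvj]
      simp

lemma mem_spanJ_iff {i j l : Fin M} {c d : k} (hij : i ≠ j) (hil : i ≠ l) (hjl : j ≠ l)
    (hc : c ≠ 0) (f : MvPolynomial (Fin M) k) :
    f ∈ Ideal.span {X i - C c * X j, X i - C d * X l} ↔ phiJ i j l c d f = 0 := by
  rw [spanJ_eq_ker hij hil hjl hc]; rfl

lemma spanJ_isPrime {i j l : Fin M} {c d : k} (hij : i ≠ j) (hil : i ≠ l) (hjl : j ≠ l)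
    (hc : c ≠ 0) :
    (Ideal.span {X i - C c * X j, X i - C d * X l} : Ideal (MvPolynomial (Fin M) k)).IsPrime := by
  rw [spanJ_eq_ker hij hil hjl hc]
  exact RingHom.ker_isPrime _

end two
noncomputable section three
variable {k : Type*} [Field k] {M n : ℕ}

lemma prod_mem_of_mem {ι : Type*} [DecidableEq ι] (s : Finset ι) (g : ι → MvPolynomial (Fin M) k)
    {x : ι} (hx : x ∈ s) {Q : Ideal (MvPolynomial (Fin M) k)} (h : g x ∈ Q) :
    ∏ y ∈ s, g y ∈ Q := by
  rw [← Finset.mul_prod_erase _ _ hx]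
  exact Ideal.mul_mem_right _ _ h

lemma cube_mem {A : Type*} [CommRing A] {I : Ideal A} {a b c : A}
    (ha : a ∈ I) (hb : b ∈ I) (hc : c ∈ I) : a * b * c ∈ I ^ 3 := by
  have : I ^ 3 = I * I * I := by ring
  rw [this]
  exact Ideal.mul_mem_mul (Ideal.mul_mem_mul ha hb) hc

lemma Xpow_sub_ne_zero (hn0 : n ≠ 0) {u v : Fin M} (huv : u ≠ v) :
    (X u : MvPolynomial (Fin M) k) ^ n - X v ^ n ≠ 0 := by
  intro h
  have := congrArg (aeval (fun w : Fin M => if w = u then (1 : k) else 0)) h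
  simp [huv.symm, zero_pow hn0] at this

lemma C_root_pow {d : k} (hd : d ^ n = 1) (l : Fin M) :
    (C d * X l : MvPolynomial (Fin M) k) ^ n = X l ^ n := by
  rw [mul_pow, ← C_pow, hd, C_1, one_mul]

lemma fC_mem (hn0 : n ≠ 0) (i j : Fin M) :
    (X i : MvPolynomial (Fin M) k) ^ n - X j ^ n ∈ Ideal.span {X i, X j} := by
  rw [mem_spanC_iff, map_sub, map_pow, map_pow, phiC_Xi, phiC_Xj, zero_pow hn0, sub_zero]

section roots
variable {p q r : Fin M} {c d : k}
  (hpq : p ≠ q) (hpr : p ≠ r) (hqr : q ≠ r) (hcn : c ^ n = 1) (hdn : d ^ n = 1) (hc : c ≠ 0)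

include hpq hpr hqr hcn hdn hc

lemma fJ_mem_pq : (X p : MvPolynomial (Fin M) k) ^ n - X q ^ n ∈
    Ideal.span {X p - C c * X q, X p - C d * X r} := by
  rw [mem_spanJ_iff hpq hpr hqr hc, map_sub, map_pow, map_pow, phiJ_Xi, phiJ_Xj c d hpq,
    C_root_pow hdn, C_root_pow (by rw [mul_pow, inv_pow, hdn, hcn, inv_one, mul_one]), sub_self]

lemma fJ_mem_pr : (X p : MvPolynomial (Fin M) k) ^ n - X r ^ n ∈
    Ideal.span {X p - C c * X q, X p - C d * X r} := by
  rw [mem_spanJ_iff hpq hpr hqr hc, map_sub, map_pow, map_pow, phiJ_Xi,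
    phiJ_X_of_ne c d (Ne.symm hpr) (Ne.symm hqr), C_root_pow hdn, sub_self]

lemma fJ_mem_qr : (X q : MvPolynomial (Fin M) k) ^ n - X r ^ n ∈
    Ideal.span {X p - C c * X q, X p - C d * X r} := by
  rw [mem_spanJ_iff hpq hpr hqr hc, map_sub, map_pow, map_pow, phiJ_Xj c d hpq,
    phiJ_X_of_ne c d (Ne.symm hpr) (Ne.symm hqr),
    C_root_pow (by rw [mul_pow, inv_pow, hdn, hcn, inv_one, mul_one]), sub_self]

end roots

end three
noncomputable section four
variable {k : Type*} [Field k] {M n : ℕ} {ε : k}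

lemma mem_cevaI {u : MvPolynomial (Fin M) k}
    (hJ : ∀ (i j l : Fin M), i < j → j < l → ∀ a b : Fin n,
      u ∈ Ideal.span {X i - C (ε ^ (a : ℕ)) * X j, X i - C (ε ^ (b : ℕ)) * X l})
    (hC : ∀ (i j : Fin M), i < j → u ∈ Ideal.span {(X i : MvPolynomial (Fin M) k), X j}) :
    u ∈ cevaI k M n ε := by
  refine Submodule.mem_inf.2 ⟨?_, ?_⟩
  · simp only [cevaJ, Submodule.mem_iInf]
    exact fun i j l hij hjl a b => hJ i j l hij hjl a b
  · simp only [cevaC, Submodule.mem_iInf]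
    exact fun i j hij => hC i j hij

lemma not_mem_cevaI {u : MvPolynomial (Fin M) k} (h : u ∉ cevaI k M n ε) :
    (∃ (i j l : Fin M) (_ : i < j) (_ : j < l) (a b : Fin n),
      u ∉ Ideal.span {X i - C (ε ^ (a : ℕ)) * X j, X i - C (ε ^ (b : ℕ)) * X l}) ∨
    (∃ (i j : Fin M) (_ : i < j), u ∉ Ideal.span {(X i : MvPolynomial (Fin M) k), X j}) := by
  by_contra hcon
  push_neg at hcon
  exact h (mem_cevaI (fun i j l hij hjl a b => hcon.1 i j l hij hjl a b)
    (fun i j hij => hcon.2 i j hij))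

end four
noncomputable section five
variable {k : Type*} [Field k] {M n : ℕ} {ε : k}

lemma root_pow (hε : IsPrimitiveRoot ε n) (a : ℕ) : (ε ^ a) ^ n = 1 := by
  calc (ε ^ a) ^ n = (ε ^ n) ^ a := by rw [← pow_mul, ← pow_mul, mul_comm]
  _ = 1 := by rw [hε.pow_eq_one, one_pow]

lemma root_ne (hε : IsPrimitiveRoot ε n) (hn0 : n ≠ 0) (a : ℕ) : ε ^ a ≠ 0 := by
  intro h
  have h1 := hε.pow_eq_one
  have hε0 : ε = 0 := pow_eq_zero_iff (n := a) (by rintro rfl; simp at h) |>.1 h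
  rw [hε0, zero_pow hn0] at h1
  exact zero_ne_one h1

/-- The finset of ordered pairs indexing the factors of the Fermat polynomial. -/
def pairsP (M : ℕ) : Finset (Fin M × Fin M) :=
  Finset.univ.filter (fun p : Fin M × Fin M => p.1 < p.2)

lemma mem_pairsP {p : Fin M × Fin M} : p ∈ pairsP M ↔ p.1 < p.2 := by
  simp [pairsP]

lemma fermatPoly_eq : fermatPoly k M n = ∏ p ∈ pairsP M, (X p.1 ^ n - X p.2 ^ n) := rfl

/-- Key lemma, C-components. -/
lemma keyC (hε : IsPrimitiveRoot ε n) (hn : 3 ≤ n) (i j : Fin M) (hij : i < j) :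
    ∃ s, s ∉ Ideal.span {(X i : MvPolynomial (Fin M) k), X j} ∧
      s * fermatPoly k M n ∈ (cevaI k M n ε) ^ 3 := by
  have hn0 : n ≠ 0 := by omega
  have hijP : ((i, j) : Fin M × Fin M) ∈ pairsP M := mem_pairsP.2 hij
  set w : MvPolynomial (Fin M) k :=
    ∏ p ∈ (pairsP M).erase (i, j), (X p.1 ^ n - X p.2 ^ n) with hw
  have hF : fermatPoly k M n = (X i ^ n - X j ^ n) * w := by
    rw [fermatPoly_eq, ← Finset.mul_prod_erase _ _ hijP]
  have wC : ∀ p q : Fin M, p < q → ((p, q) : Fin M × Fin M) ≠ (i, j) →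
      w ∈ Ideal.span {(X p : MvPolynomial (Fin M) k), X q} := by
    intro p q hpq hne
    exact prod_mem_of_mem _ _ (Finset.mem_erase.2 ⟨hne, mem_pairsP.2 hpq⟩) (fC_mem hn0 p q)
  have wJ : ∀ (p q r : Fin M), p < q → q < r → ∀ a b : Fin n,
      w ∈ Ideal.span {X p - C (ε ^ (a : ℕ)) * X q, X p - C (ε ^ (b : ℕ)) * X r} := by
    intro p q r hpq hqr a b
    have hcn := root_pow hε (a : ℕ)
    have hdn := root_pow hε (b : ℕ)
    have hc := root_ne hε hn0 (a : ℕ)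
    have hpq' : p ≠ q := ne_of_lt hpq
    have hqr' : q ≠ r := ne_of_lt hqr
    have hpr' : p ≠ r := ne_of_lt (hpq.trans hqr)
    by_cases hcase : ((p, q) : Fin M × Fin M) = (i, j)
    · have hne : ((p, r) : Fin M × Fin M) ≠ (i, j) := by
        rw [Prod.mk.injEq] at hcase
        intro hE
        rw [Prod.mk.injEq] at hE
        exact hqr.ne (hcase.2.trans hE.2.symm)
      exact prod_mem_of_mem _ _ (Finset.mem_erase.2 ⟨hne, mem_pairsP.2 (hpq.trans hqr)⟩)
        (fJ_mem_pr hpq' hpr' hqr' hcn hdn hc)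
    · exact prod_mem_of_mem _ _ (Finset.mem_erase.2 ⟨hcase, mem_pairsP.2 hpq⟩)
        (fJ_mem_pq hpq' hpr' hqr' hcn hdn hc)
  have wphi : phiC i j w ≠ 0 := by
    rw [hw, map_prod]
    rw [Finset.prod_ne_zero_iff]
    intro p hp
    have hne := (Finset.mem_erase.1 hp).1
    have hlt := mem_pairsP.1 (Finset.mem_erase.1 hp).2
    rw [map_sub, map_pow, map_pow]
    by_cases h1 : p.1 = i
    · by_cases h4 : p.2 = j
      · exact absurd (Prod.ext h1 h4) hne
      · by_cases h3 : p.2 = i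
        · exact absurd hlt (by rw [h1, h3]; exact lt_irrefl i)
        · rw [h1, phiC_Xi, phiC_X_of_ne h3 h4, zero_pow hn0, zero_sub]
          exact neg_ne_zero.2 (pow_ne_zero _ (X_ne_zero _))
    · by_cases h2 : p.1 = j
      · have h3 : p.2 ≠ i := fun h => absurd hlt (by rw [h2, h]; exact asymm hij)
        have h4 : p.2 ≠ j := fun h => absurd hlt (by rw [h2, h]; exact lt_irrefl j)
        rw [h2, phiC_Xj, phiC_X_of_ne h3 h4, zero_pow hn0, zero_sub]
        exact neg_ne_zero.2 (pow_ne_zero _ (X_ne_zero _))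
      · by_cases h3 : p.2 = i
        · rw [phiC_X_of_ne h1 h2, h3, phiC_Xi, zero_pow hn0, sub_zero]
          exact pow_ne_zero _ (X_ne_zero _)
        · by_cases h4 : p.2 = j
          · rw [phiC_X_of_ne h1 h2, h4, phiC_Xj, zero_pow hn0, sub_zero]
            exact pow_ne_zero _ (X_ne_zero _)
          · rw [phiC_X_of_ne h1 h2, phiC_X_of_ne h3 h4]
            exact Xpow_sub_ne_zero hn0 hlt.ne
  have hXi : (X i : MvPolynomial (Fin M) k) ∈ Ideal.span {(X i : MvPolynomial (Fin M) k), X j} :=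
    Ideal.subset_span (by simp)
  have hXj : (X j : MvPolynomial (Fin M) k) ∈ Ideal.span {(X i : MvPolynomial (Fin M) k), X j} :=
    Ideal.subset_span (by simp)
  have hXi2 : (X i : MvPolynomial (Fin M) k) ^ (n - 2) ∈
      Ideal.span {(X i : MvPolynomial (Fin M) k), X j} :=
    Ideal.pow_mem_of_mem _ hXi _ (by omega)
  have hXj2 : (X j : MvPolynomial (Fin M) k) ^ (n - 2) ∈
      Ideal.span {(X i : MvPolynomial (Fin M) k), X j} :=
    Ideal.pow_mem_of_mem _ hXj _ (by omega)
  have hu : ∀ g : MvPolynomial (Fin M) k, g ∈ Ideal.span {(X i : MvPolynomial (Fin M) k), X j} →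
      w * g ∈ cevaI k M n ε := by
    intro g hg
    apply mem_cevaI
    · intro p q r hpq hqr a b
      exact Ideal.mul_mem_right _ _ (wJ p q r hpq hqr a b)
    · intro p q hpq
      by_cases hc : ((p, q) : Fin M × Fin M) = (i, j)
      · rw [Prod.mk.injEq] at hc
        obtain ⟨rfl, rfl⟩ := hc
        exact Ideal.mul_mem_left _ _ hg
      · exact Ideal.mul_mem_right _ _ (wC p q hpq hc)
  refine ⟨w ^ 3, ?_, ?_⟩
  · intro hmem
    exact pow_ne_zero 3 wphi (by rwa [mem_spanC_iff, map_pow] at hmem)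
  · have hid : w ^ 3 * fermatPoly k M n =
        ((w * X i) * (w * X i) * (w * X i ^ (n - 2)) -
          (w * X j) * (w * X j) * (w * X j ^ (n - 2))) * w := by
      rw [hF]
      have e1 : (X i : MvPolynomial (Fin M) k) ^ n = X i ^ 2 * X i ^ (n - 2) := by
        rw [← pow_add]; congr 1; omega
      have e2 : (X j : MvPolynomial (Fin M) k) ^ n = X j ^ 2 * X j ^ (n - 2) := by
        rw [← pow_add]; congr 1; omega
      rw [e1, e2]; ring
    rw [hid]
    exact Ideal.mul_mem_right _ _ (Ideal.sub_mem _
      (cube_mem (hu _ hXi) (hu _ hXi) (hu _ hXi2))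
      (cube_mem (hu _ hXj) (hu _ hXj) (hu _ hXj2)))

/-- Key lemma, J-components. -/
lemma keyJ (hε : IsPrimitiveRoot ε n) (hn : 3 ≤ n) (i j l : Fin M) (hij : i < j) (hjl : j < l)
    (a b : Fin n) :
    ∃ s, s ∉ Ideal.span {X i - C (ε ^ (a : ℕ)) * X j, X i - C (ε ^ (b : ℕ)) * X l} ∧
      s * fermatPoly k M n ∈ (cevaI k M n ε) ^ 3 := by
  have hn0 : n ≠ 0 := by omega
  have hil : i < l := hij.trans hjl
  have hij' : i ≠ j := hij.ne
  have hjl' : j ≠ l := hjl.ne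
  have hil' : i ≠ l := hil.ne
  set c := ε ^ (a : ℕ) with hc
  set d := ε ^ (b : ℕ) with hd
  have hcn : c ^ n = 1 := root_pow hε _
  have hdn : d ^ n = 1 := root_pow hε _
  have hc0 : c ≠ 0 := root_ne hε hn0 _
  have hd0 : d ≠ 0 := root_ne hε hn0 _
  set T : Finset (Fin M × Fin M) := {(i, j), (i, l), (j, l)} with hT
  have hTP : T ⊆ pairsP M := by
    intro p hp
    rw [hT, Finset.mem_insert, Finset.mem_insert, Finset.mem_singleton] at hp
    rcases hp with rfl | rfl | rfl
    · exact mem_pairsP.2 hij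
    · exact mem_pairsP.2 hil
    · exact mem_pairsP.2 hjl
  have prodT : ∏ p ∈ T, ((X p.1 : MvPolynomial (Fin M) k) ^ n - X p.2 ^ n) =
      (X i ^ n - X j ^ n) * ((X i ^ n - X l ^ n) * (X j ^ n - X l ^ n)) := by
    rw [hT, Finset.prod_insert, Finset.prod_insert, Finset.prod_singleton]
    · rw [Finset.mem_singleton]
      intro hE; rw [Prod.mk.injEq] at hE; exact hij' hE.1
    · rw [Finset.mem_insert, Finset.mem_singleton]
      rintro (hE | hE) <;> rw [Prod.mk.injEq] at hE
      · exact hjl' hE.2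
      · exact hij' hE.1
  set E : MvPolynomial (Fin M) k := ∏ p ∈ pairsP M \ T, (X p.1 ^ n - X p.2 ^ n) with hEdef
  have hF : fermatPoly k M n =
      E * ((X i ^ n - X j ^ n) * ((X i ^ n - X l ^ n) * (X j ^ n - X l ^ n))) := by
    rw [fermatPoly_eq, ← Finset.prod_sdiff hTP, prodT]
  have EC : ∀ p q : Fin M, p < q → ((p, q) : Fin M × Fin M) ∉ T →
      E ∈ Ideal.span {(X p : MvPolynomial (Fin M) k), X q} := fun p q hpq hnT =>
    prod_mem_of_mem _ _ (Finset.mem_sdiff.2 ⟨mem_pairsP.2 hpq, hnT⟩) (fC_mem hn0 p q)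
  have EJ : ∀ p q r : Fin M, p < q → q < r → ¬(p = i ∧ q = j ∧ r = l) → ∀ a' b' : Fin n,
      E ∈ Ideal.span {X p - C (ε ^ (a' : ℕ)) * X q, X p - C (ε ^ (b' : ℕ)) * X r} := by
    intro p q r hpq hqr hne a' b'
    have h1 := root_pow hε (a' : ℕ)
    have h2 := root_pow hε (b' : ℕ)
    have h3 := root_ne hε hn0 (a' : ℕ)
    have hpr : p < r := hpq.trans hqr
    by_cases hA : ((p, q) : Fin M × Fin M) ∈ T
    · by_cases hB : ((p, r) : Fin M × Fin M) ∈ T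
      · by_cases hC : ((q, r) : Fin M × Fin M) ∈ T
        · exfalso
          apply hne
          rw [hT] at hA hB hC
          simp only [Finset.mem_insert, Finset.mem_singleton, Prod.mk.injEq, Fin.ext_iff] at hA hB hC
          simp only [Fin.ext_iff]
          have e1 : (i : ℕ) < (j : ℕ) := hij
          have e2 : (j : ℕ) < (l : ℕ) := hjl
          have e3 : (p : ℕ) < (q : ℕ) := hpq
          have e4 : (q : ℕ) < (r : ℕ) := hqr
          omega
        · exact prod_mem_of_mem _ _ (Finset.mem_sdiff.2 ⟨mem_pairsP.2 hqr, hC⟩)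
            (fJ_mem_qr hpq.ne hpr.ne hqr.ne h1 h2 h3)
      · exact prod_mem_of_mem _ _ (Finset.mem_sdiff.2 ⟨mem_pairsP.2 hpr, hB⟩)
          (fJ_mem_pr hpq.ne hpr.ne hqr.ne h1 h2 h3)
    · exact prod_mem_of_mem _ _ (Finset.mem_sdiff.2 ⟨mem_pairsP.2 hpq, hA⟩)
        (fJ_mem_pq hpq.ne hpr.ne hqr.ne h1 h2 h3)
  -- the common cofactor
  set h0 : MvPolynomial (Fin M) k := X i * (X j * X l) with hh0
  have h0C : ∀ p q : Fin M, ((p, q) : Fin M × Fin M) ∈ T →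
      h0 ∈ Ideal.span {(X p : MvPolynomial (Fin M) k), X q} := by
    intro p q hpq
    rw [hT] at hpq
    rw [Finset.mem_insert, Finset.mem_insert, Finset.mem_singleton] at hpq
    rcases hpq with hE | hE | hE <;> rw [Prod.mk.injEq] at hE <;> obtain ⟨rfl, rfl⟩ := hE
    · exact Ideal.mul_mem_right _ _ (Ideal.subset_span (by simp))
    · exact Ideal.mul_mem_right _ _ (Ideal.subset_span (by simp))
    · exact Ideal.mul_mem_left _ _ (Ideal.mul_mem_right _ _ (Ideal.subset_span (by simp)))
  -- the three elements of the ideal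
  have hu : ∀ g : MvPolynomial (Fin M) k,
      (∀ a' b' : Fin n, g ∈ Ideal.span {X i - C (ε ^ (a' : ℕ)) * X j, X i - C (ε ^ (b' : ℕ)) * X l}) →
      g * (E * h0) ∈ cevaI k M n ε := by
    intro g hgJ
    apply mem_cevaI
    · intro p q r hpq hqr a' b'
      by_cases hcase : p = i ∧ q = j ∧ r = l
      · obtain ⟨rfl, rfl, rfl⟩ := hcase
        exact Ideal.mul_mem_right _ _ (hgJ a' b')
      · exact Ideal.mul_mem_left _ _ (Ideal.mul_mem_right _ _ (EJ p q r hpq hqr hcase a' b'))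
    · intro p q hpq
      by_cases hcase : ((p, q) : Fin M × Fin M) ∈ T
      · exact Ideal.mul_mem_left _ _ (Ideal.mul_mem_left _ _ (h0C p q hcase))
      · exact Ideal.mul_mem_left _ _ (Ideal.mul_mem_right _ _ (EC p q hpq hcase))
  have hu1 : (X i ^ n - X j ^ n) * (E * h0) ∈ cevaI k M n ε :=
    hu _ (fun a' b' => fJ_mem_pq hij' hil' hjl' (root_pow hε _) (root_pow hε _) (root_ne hε hn0 _))
  have hu2 : (X i ^ n - X l ^ n) * (E * h0) ∈ cevaI k M n ε :=
    hu _ (fun a' b' => fJ_mem_pr hij' hil' hjl' (root_pow hε _) (root_pow hε _) (root_ne hε hn0 _))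
  have hu3 : (X j ^ n - X l ^ n) * (E * h0) ∈ cevaI k M n ε :=
    hu _ (fun a' b' => fJ_mem_qr hij' hil' hjl' (root_pow hε _) (root_pow hε _) (root_ne hε hn0 _))
  -- non-membership of the cofactor
  have hCd : (C d : MvPolynomial (Fin M) k) ≠ 0 := fun hh => hd0 (by
    have := congrArg (eval (fun _ : Fin M => (0 : k))) hh
    simpa using this)
  have hCdc : (C (d * c⁻¹) : MvPolynomial (Fin M) k) ≠ 0 := fun hh =>
    (mul_ne_zero hd0 (inv_ne_zero hc0)) (by
      have := congrArg (eval (fun _ : Fin M => (0 : k))) hh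
      simpa using this)
  have hphih0 : phiJ i j l c d h0 ≠ 0 := by
    rw [hh0, map_mul, map_mul, phiJ_Xi, phiJ_Xj c d hij',
      phiJ_X_of_ne c d (Ne.symm hil') (Ne.symm hjl')]
    exact mul_ne_zero (mul_ne_zero hCd (X_ne_zero _))
      (mul_ne_zero (mul_ne_zero hCdc (X_ne_zero _)) (X_ne_zero _))
  have hphiE : phiJ i j l c d E ≠ 0 := by
    rw [hEdef, map_prod, Finset.prod_ne_zero_iff]
    intro p hp
    obtain ⟨hpP, hpT⟩ := Finset.mem_sdiff.1 hp
    have hlt := mem_pairsP.1 hpP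
    rw [map_sub, map_pow, map_pow]
    have hTij : ((i, j) : Fin M × Fin M) ∈ T := by rw [hT]; simp
    have hTil : ((i, l) : Fin M × Fin M) ∈ T := by rw [hT]; simp
    have hTjl : ((j, l) : Fin M × Fin M) ∈ T := by rw [hT]; simp
    by_cases h1 : p.1 = i
    · have h2 : p.2 ≠ j := fun hE => hpT (by rw [← h1, ← hE] at hTij; exact hTij)
      have h3 : p.2 ≠ l := fun hE => hpT (by rw [← h1, ← hE] at hTil; exact hTil)
      have h4 : p.2 ≠ i := fun hE => absurd hlt (by rw [h1, hE]; exact lt_irrefl i)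
      rw [h1, phiJ_Xi, phiJ_X_of_ne c d h4 h2, C_root_pow hdn]
      exact Xpow_sub_ne_zero hn0 (Ne.symm h3)
    · by_cases h2 : p.1 = j
      · have h3 : p.2 ≠ l := fun hE => hpT (by rw [← h2, ← hE] at hTjl; exact hTjl)
        have h4 : p.2 ≠ i := fun hE => absurd hlt (by rw [h2, hE]; exact asymm hij)
        have h5 : p.2 ≠ j := fun hE => absurd hlt (by rw [h2, hE]; exact lt_irrefl j)
        rw [h2, phiJ_Xj c d hij', phiJ_X_of_ne c d h4 h5,
          C_root_pow (by rw [mul_pow, inv_pow, hdn, hcn, inv_one, mul_one])]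
        exact Xpow_sub_ne_zero hn0 (Ne.symm h3)
      · rw [phiJ_X_of_ne c d h1 h2]
        by_cases h3 : p.2 = i
        · have hpl : p.1 ≠ l := fun hE => absurd hlt (by rw [hE, h3]; exact asymm hil)
          rw [h3, phiJ_Xi, C_root_pow hdn]
          exact Xpow_sub_ne_zero hn0 hpl
        · by_cases h4 : p.2 = j
          · have hpl : p.1 ≠ l := fun hE => absurd hlt (by rw [hE, h4]; exact asymm hjl)
            rw [h4, phiJ_Xj c d hij',
              C_root_pow (by rw [mul_pow, inv_pow, hdn, hcn, inv_one, mul_one])]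
            exact Xpow_sub_ne_zero hn0 hpl
          · rw [phiJ_X_of_ne c d h3 h4]
            exact Xpow_sub_ne_zero hn0 hlt.ne
  refine ⟨(E * h0) ^ 3, ?_, ?_⟩
  · intro hmem
    rw [mem_spanJ_iff hij' hil' hjl' hc0, map_pow, map_mul] at hmem
    exact pow_ne_zero 3 (mul_ne_zero hphiE hphih0) hmem
  · have hid : (E * h0) ^ 3 * fermatPoly k M n =
        ((X i ^ n - X j ^ n) * (E * h0)) * ((X i ^ n - X l ^ n) * (E * h0)) *
          ((X j ^ n - X l ^ n) * (E * h0)) * E := by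
      rw [hF]; ring
    rw [hid]
    exact Ideal.mul_mem_right _ _ (cube_mem hu1 hu2 hu3)

end five
noncomputable section six
variable {k : Type*} [Field k] {M n : ℕ} {ε : k}

lemma cevaI_le_spanC (i j : Fin M) (hij : i < j) :
    cevaI k M n ε ≤ Ideal.span {(X i : MvPolynomial (Fin M) k), X j} := by
  intro u hu
  have h := (Submodule.mem_inf.1 hu).2
  simp only [cevaC, Submodule.mem_iInf] at h
  exact h i j hij

lemma cevaI_le_spanJ (i j l : Fin M) (hij : i < j) (hjl : j < l) (a b : Fin n) :
    cevaI k M n ε ≤ Ideal.span {X i - C (ε ^ (a : ℕ)) * X j, X i - C (ε ^ (b : ℕ)) * X l} := by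
  intro u hu
  have h := (Submodule.mem_inf.1 hu).1
  simp only [cevaJ, Submodule.mem_iInf] at h
  exact h i j l hij hjl a b

theorem stmt5' {n N : ℕ} (hn : 3 ≤ n) (hε : IsPrimitiveRoot ε n) :
    fermatPoly k (N + 1) n ∈ symbolicPower (cevaI k (N + 1) n ε) 3 := by
  have hn0 : n ≠ 0 := by omega
  rw [symbolicPower]
  apply Submodule.mem_sInf.2
  rintro K ⟨p, hp, rfl⟩
  have hprime : p.IsPrime := hp.1
  obtain ⟨x, hx⟩ := hp.2
  obtain ⟨f, rfl⟩ := Ideal.Quotient.mk_surjective x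
  have hpf : ∀ q : MvPolynomial (Fin (N + 1)) k,
      q ∈ p ↔ ∃ m : ℕ, q ^ m * f ∈ cevaI k (N + 1) n ε := by
    intro q
    rw [hx]
    show (∃ m : ℕ, q ^ m ∈ _) ↔ _
    simp only [Submodule.mem_colon_singleton, Submodule.mem_bot]
    refine exists_congr fun m => ?_
    have hsm : q ^ m • Ideal.Quotient.mk (cevaI k (N + 1) n ε) f =
        Ideal.Quotient.mk (cevaI k (N + 1) n ε) (q ^ m * f) := rfl
    rw [hsm, Ideal.Quotient.eq_zero_iff_mem]
  have hfI : f ∉ cevaI k (N + 1) n ε := by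
    intro hf
    have h1 : (1 : MvPolynomial (Fin (N + 1)) k) ∈ p := (hpf 1).2 ⟨0, by simpa using hf⟩
    exact hprime.ne_top ((Ideal.eq_top_iff_one p).2 h1)
  -- find a component Q with f ∉ Q, get s ∉ Q with s * F ∈ I ^ 3
  have main : ∃ s : MvPolynomial (Fin (N + 1)) k, s ∉ p ∧
      s * fermatPoly k (N + 1) n ∈ (cevaI k (N + 1) n ε) ^ 3 := by
    rcases not_mem_cevaI hfI with ⟨i, j, l, hij, hjl, a, b, hfQ⟩ | ⟨i, j, hij, hfQ⟩
    · have hil : i < l := hij.trans hjl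
      have hQprime : (Ideal.span {X i - C (ε ^ (a : ℕ)) * X j,
          X i - C (ε ^ (b : ℕ)) * X l} : Ideal (MvPolynomial (Fin (N + 1)) k)).IsPrime :=
        spanJ_isPrime hij.ne hil.ne hjl.ne (root_ne hε hn0 _)
      have hpQ : p ≤ Ideal.span {X i - C (ε ^ (a : ℕ)) * X j, X i - C (ε ^ (b : ℕ)) * X l} := by
        intro q hq
        obtain ⟨m, hm⟩ := (hpf q).1 hq
        have hqf := cevaI_le_spanJ i j l hij hjl a b hm
        exact hQprime.mem_of_pow_mem m ((hQprime.mem_or_mem hqf).resolve_right hfQ)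
      obtain ⟨s, hsQ, hsF⟩ := keyJ hε hn i j l hij hjl a b
      exact ⟨s, fun hsp => hsQ (hpQ hsp), hsF⟩
    · have hQprime : (Ideal.span {(X i : MvPolynomial (Fin (N + 1)) k), X j}).IsPrime :=
        spanC_isPrime i j
      have hpQ : p ≤ Ideal.span {(X i : MvPolynomial (Fin (N + 1)) k), X j} := by
        intro q hq
        obtain ⟨m, hm⟩ := (hpf q).1 hq
        have hqf := cevaI_le_spanC i j hij hm
        exact hQprime.mem_of_pow_mem m ((hQprime.mem_or_mem hqf).resolve_right hfQ)
      obtain ⟨s, hsQ, hsF⟩ := keyC hε hn i j hij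
      exact ⟨s, fun hsp => hsQ (hpQ hsp), hsF⟩
  obtain ⟨s, hsp, hsF⟩ := main
  rw [Ideal.mem_comap]
  have h1 := Ideal.mem_map_of_mem
    (algebraMap (MvPolynomial (Fin (N + 1)) k) (Localization p.primeCompl)) hsF
  have hunit := IsLocalization.map_units (Localization p.primeCompl)
    (⟨s, hsp⟩ : p.primeCompl)
  obtain ⟨v, hv⟩ := hunit
  have heq : algebraMap (MvPolynomial (Fin (N + 1)) k) (Localization p.primeCompl)
      (fermatPoly k (N + 1) n) = (↑v⁻¹ : Localization p.primeCompl) *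
      algebraMap (MvPolynomial (Fin (N + 1)) k) (Localization p.primeCompl)
        (s * fermatPoly k (N + 1) n) := by
    rw [map_mul, ← hv, ← mul_assoc]
    simp
  rw [heq]
  exact Ideal.mul_mem_left _ _ h1

end six

noncomputable section

/-- For `n ≥ 3` and a primitive `n`-th root of unity `ε ∈ k`, the Fermat
product `F_{N,n}` lies in the third symbolic power of `I_{N,n} = J_{N,n} ∩ C_{N,n}`. -/
theorem stmt5 {k : Type*} [Field k] {n N : ℕ} (hn : 3 ≤ n) {ε : k}
    (hε : IsPrimitiveRoot ε n) :
    fermatPoly k (N + 1) n ∈ symbolicPower (cevaI k (N + 1) n ε) 3 :=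
  stmt5' hn hε

end
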